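/- Let Γ : ℕ → ℝ satisfy Γ^(l) = ∑_{k=t}^{L} c(k)(Γ^(l-1))^k with c(k) ≥ 0, t ≥ 1, and Γ^(l-1) ≥ 0. If Γ^(l) ≤ ε Γ^(l-1) for some 0 ≤ ε ≤ 1, then Γ^(l+1) ≤ ε^(t+1) Γ^(l-1). -/

import Mathlib

/-- Base case of the error-suppression lemma: if `Γ l ≤ ε Γ (l-1)` then
`Γ (l+1) ≤ ε^(t+1) Γ (l-1)`. -/
theorem stmt_1 (t L : ℕ) (ht : 1 ≤ t) (c : ℕ → ℝ) (hc : ∀ k, 0 ≤ c k)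
    (Γ : ℕ → ℝ) (hΓpos : ∀ n, 0 ≤ Γ n)
    (hrec : ∀ n, Γ (n + 1) = ∑ k ∈ Finset.Icc t L, c k * Γ n ^ k)
    (l : ℕ) (hl : 1 ≤ l) (ε : ℝ) (hε0 : 0 ≤ ε) (hε1 : ε ≤ 1)
    (h : Γ l ≤ ε * Γ (l - 1)) :
    Γ (l + 1) ≤ ε ^ (t + 1) * Γ (l - 1) := by
  have hΓl : Γ l = ∑ k ∈ Finset.Icc t L, c k * Γ (l - 1) ^ k := by
    have := hrec (l - 1)
    rwa [Nat.sub_add_cancel hl] at this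
  have h1 : Γ (l + 1) ≤ ε ^ t * Γ l := by
    rw [hrec l]
    conv_rhs => rw [hΓl, Finset.mul_sum]
    apply Finset.sum_le_sum
    intro k hk
    have hkt : t ≤ k := (Finset.mem_Icc.mp hk).1
    have h2 : Γ l ^ k ≤ ε ^ k * Γ (l - 1) ^ k := by
      calc Γ l ^ k ≤ (ε * Γ (l - 1)) ^ k := pow_le_pow_left₀ (hΓpos l) h k
        _ = ε ^ k * Γ (l - 1) ^ k := mul_pow _ _ _
    have h3 : ε ^ k ≤ ε ^ t := pow_le_pow_of_le_one hε0 hε1 hkt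
    calc c k * Γ l ^ k ≤ c k * (ε ^ k * Γ (l - 1) ^ k) :=
          mul_le_mul_of_nonneg_left h2 (hc k)
      _ ≤ c k * (ε ^ t * Γ (l - 1) ^ k) := by
          apply mul_le_mul_of_nonneg_left _ (hc k)
          exact mul_le_mul_of_nonneg_right h3 (pow_nonneg (hΓpos _) k)
      _ = ε ^ t * (c k * Γ (l - 1) ^ k) := by ring
  calc Γ (l + 1) ≤ ε ^ t * Γ l := h1
    _ ≤ ε ^ t * (ε * Γ (l - 1)) := mul_le_mul_of_nonneg_left h (pow_nonneg hε0 t)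
    _ = ε ^ (t + 1) * Γ (l - 1) := by ring
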